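/- In R = MvPowerSeries (Fin m) ℚ, the power series Td · (Σ_{r=2}^m (−1)^r · r(r−1) · ch_r) agrees in total degree m with (1/6) · e_1 · e_{m−1} + (m(3m−5)/12) · e_m. -/

import Mathlib

open Finset

noncomputable section

/-- The element of `MvPowerSeries (Fin m) ℚ` obtained by substituting the variable `X j`
into a one-variable formal power series `f`. -/
def substAt {m : ℕ} (j : Fin m) (f : PowerSeries ℚ) : MvPowerSeries (Fin m) ℚ :=
  fun n => if n.support ⊆ {j} then PowerSeries.coeff (R := ℚ) (n j) f else 0

/-- The one-variable power series `exp (−X) = Σ_{n ≥ 0} (−X)^n / n!`. -/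
def expNeg : PowerSeries ℚ := PowerSeries.mk fun n => (-1) ^ n / n.factorial

/-- `ch m r = Σ_{S ⊆ Fin m, |S| = r} ∏_{j ∈ S} exp (−X j)`, the `r`-th Chern character
term of the exterior powers, written in Chern roots. -/
def ch (m : ℕ) (r : ℕ) : MvPowerSeries (Fin m) ℚ :=
  ∑ S ∈ Finset.powersetCard r (Finset.univ : Finset (Fin m)),
    ∏ j ∈ S, substAt j expNeg

/-- `esymm m k = Σ_{S ⊆ Fin m, |S| = k} ∏_{j ∈ S} X j`, the `k`-th elementary symmetric
polynomial of the variables, as a multivariate power series. -/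
def esymm (m : ℕ) (k : ℕ) : MvPowerSeries (Fin m) ℚ :=
  ∑ S ∈ Finset.powersetCard k (Finset.univ : Finset (Fin m)),
    ∏ j ∈ S, MvPowerSeries.X j

/-- The Todd class `Td = ∏_{j=1}^m φ(X_j)` written in Chern roots, where `φ` is the
Todd series `X/(1 − e^{−X})`. -/
def Td (m : ℕ) (φ : PowerSeries ℚ) : MvPowerSeries (Fin m) ℚ :=
  ∏ j : Fin m, substAt j φ

/-- `Td′ = Σ_{j=1}^m φ′(X_j) · ∏_{k ≠ j} φ(X_k)`, the class
`Td′(A) = ∂/∂t Td(A + t·Id)|_{t=0}` written in Chern roots. -/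
def Td' (m : ℕ) (φ : PowerSeries ℚ) : MvPowerSeries (Fin m) ℚ :=
  ∑ j : Fin m, substAt j (PowerSeries.derivative (R := ℚ) φ) *
    ∏ k ∈ Finset.univ.erase j, substAt k φ

/-- Two multivariate power series agree in total degree `≤ p`: their coefficients at every
multi-exponent of total degree `≤ p` coincide. -/
def AgreeUpTo (m p : ℕ) (F G : MvPowerSeries (Fin m) ℚ) : Prop :=
  ∀ n : Fin m →₀ ℕ, (∑ j, n j) ≤ p → MvPowerSeries.coeff (R := ℚ) n F = MvPowerSeries.coeff (R := ℚ) n G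

/-- Two multivariate power series agree in total degree `p`: their coefficients at every
multi-exponent of total degree `p` coincide. -/
def AgreeAt (m p : ℕ) (F G : MvPowerSeries (Fin m) ℚ) : Prop :=
  ∀ n : Fin m →₀ ℕ, (∑ j, n j) = p → MvPowerSeries.coeff (R := ℚ) n F = MvPowerSeries.coeff (R := ℚ) n G

lemma coeff_substAt {m : ℕ} (j : Fin m) (f : PowerSeries ℚ) (n : Fin m →₀ ℕ) :
    MvPowerSeries.coeff (R := ℚ) n (substAt j f) =
      if n.support ⊆ {j} then PowerSeries.coeff (R := ℚ) (n j) f else 0 := rfl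

lemma supp_subset_iff {m : ℕ} (j : Fin m) (n : Fin m →₀ ℕ) :
    n.support ⊆ {j} ↔ n = Finsupp.single j (n j) := by
  constructor
  · intro h
    ext i
    by_cases hi : i = j
    · subst hi; simp
    · have : i ∉ n.support := fun hmem => hi (Finset.mem_singleton.mp (h hmem))
      simp [Finsupp.notMem_support_iff.mp this, Finsupp.single_eq_of_ne' (Ne.symm hi)]
  · intro h
    rw [h]
    exact Finsupp.support_single_subset

lemma coeff_substAt_single {m : ℕ} (j : Fin m) (f : PowerSeries ℚ) (d : ℕ) :
    MvPowerSeries.coeff (R := ℚ) (Finsupp.single j d) (substAt j f) = PowerSeries.coeff (R := ℚ) d f := by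
  rw [coeff_substAt, if_pos Finsupp.support_single_subset, Finsupp.single_eq_same]

lemma substAt_mul {m : ℕ} (j : Fin m) (f g : PowerSeries ℚ) :
    substAt j (f * g) = substAt j f * substAt j g := by
  ext n
  rw [MvPowerSeries.coeff_mul, coeff_substAt]
  by_cases h : n.support ⊆ {j}
  · rw [if_pos h]
    obtain ⟨d, rfl⟩ : ∃ d, n = Finsupp.single j d := ⟨n j, (supp_subset_iff j n).mp h⟩
    rw [Finsupp.single_eq_same, Finsupp.antidiagonal_single, Finset.sum_map, PowerSeries.coeff_mul]
    refine Finset.sum_congr rfl fun p _ => ?_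
    simp [coeff_substAt_single]
  · rw [if_neg h]
    symm
    apply Finset.sum_eq_zero
    intro p hp
    rw [Finset.HasAntidiagonal.mem_antidiagonal] at hp
    have : ¬ p.1.support ⊆ {j} ∨ ¬ p.2.support ⊆ {j} := by
      by_contra hc
      push_neg at hc
      exact h (hp ▸ (Finsupp.support_add).trans (Finset.union_subset hc.1 hc.2))
    rcases this with h1 | h1 <;> simp [coeff_substAt, h1]

lemma substAt_one {m : ℕ} (j : Fin m) : substAt j 1 = 1 := by
  ext n
  rw [coeff_substAt]
  by_cases h : n.support ⊆ {j}
  · rw [if_pos h, PowerSeries.coeff_one, MvPowerSeries.coeff_one]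
    rw [supp_subset_iff] at h
    by_cases h0 : n j = 0
    · have hn0 : n = 0 := by rw [h, h0, Finsupp.single_zero]
      simp [h0, hn0]
    · rw [if_neg h0, if_neg]
      intro hn
      rw [hn] at h0
      simp at h0
  · rw [if_neg h, MvPowerSeries.coeff_one, if_neg]
    intro hn
    subst hn
    simp at h

lemma substAt_sub {m : ℕ} (j : Fin m) (f g : PowerSeries ℚ) :
    substAt j (f - g) = substAt j f - substAt j g := by
  ext n
  rw [map_sub, coeff_substAt, coeff_substAt, coeff_substAt]
  split <;> simp [map_sub]

lemma substAt_X {m : ℕ} (j : Fin m) : substAt j PowerSeries.X = MvPowerSeries.X j := by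
  ext n
  rw [coeff_substAt, MvPowerSeries.coeff_X]
  by_cases h : n.support ⊆ {j}
  · rw [if_pos h, PowerSeries.coeff_X]
    rw [supp_subset_iff] at h
    by_cases h1 : n j = 1
    · rw [if_pos h1, if_pos (by rw [h, h1])]
    · rw [if_neg h1, if_neg (fun hn => h1 (by rw [hn, Finsupp.single_eq_same]))]
  · rw [if_neg h, if_neg (fun hn => h (by rw [hn]; exact Finsupp.support_single_subset))]

lemma g_coeffs (φ : PowerSeries ℚ) (hφ : φ * (1 - expNeg) = PowerSeries.X) :
    PowerSeries.coeff (R := ℚ) 0 (φ * expNeg) = 1 ∧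
    PowerSeries.coeff (R := ℚ) 1 (φ * expNeg) = -(1/2) ∧
    PowerSeries.coeff (R := ℚ) 2 (φ * expNeg) = 1/12 := by
  have e : ∀ n, PowerSeries.coeff (R := ℚ) n expNeg = (-1)^n / n.factorial := fun n => by
    simp [expNeg]
  have h1 := congrArg (PowerSeries.coeff (R := ℚ) 1) hφ
  have h2 := congrArg (PowerSeries.coeff (R := ℚ) 2) hφ
  have h3 := congrArg (PowerSeries.coeff (R := ℚ) 3) hφ
  simp [PowerSeries.coeff_mul, Finset.Nat.sum_antidiagonal_eq_sum_range_succ_mk,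
    Finset.sum_range_succ, e, PowerSeries.coeff_one, PowerSeries.coeff_X,
    Nat.factorial] at h1 h2 h3 ⊢
  norm_num at h1 h2 h3 ⊢
  refine ⟨by linarith, by linarith, by linarith⟩

lemma structural (m : ℕ) (φ : PowerSeries ℚ) (hφ : φ * (1 - expNeg) = PowerSeries.X) :
    Td m φ * ∑ r ∈ Finset.Icc 2 m,
        (-1 : MvPowerSeries (Fin m) ℚ) ^ r * (r : MvPowerSeries (Fin m) ℚ) *
          ((r : MvPowerSeries (Fin m) ℚ) - 1) * ch m r
    = ∑ p ∈ (Finset.univ : Finset (Fin m)).offDiag,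
        substAt p.1 (φ * expNeg) * substAt p.2 (φ * expNeg) *
          ∏ l ∈ Finset.univ \ {p.1, p.2}, MvPowerSeries.X l := by
  classical
  set R := MvPowerSeries (Fin m) ℚ
  set E : Fin m → R := fun j => substAt j expNeg with hE
  -- Step A: extend sum to range (m+1)
  have stepA : (∑ r ∈ Finset.Icc 2 m,
        (-1 : R) ^ r * (r : R) * ((r : R) - 1) * ch m r)
      = ∑ r ∈ Finset.range (m+1), (-1 : R) ^ r * (r : R) * ((r : R) - 1) * ch m r := by
    apply Finset.sum_subset
    · intro r hr
      rw [Finset.mem_Icc] at hr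
      exact Finset.mem_range.mpr (Nat.lt_succ_of_le hr.2)
    · intro r hr hnot
      rw [Finset.mem_range, Nat.lt_succ_iff] at hr
      rw [Finset.mem_Icc, not_and_or] at hnot
      have : r = 0 ∨ r = 1 := by omega
      rcases this with rfl | rfl <;> simp
  rw [stepA]
  -- Step B: sum over powerset
  have stepB : (∑ r ∈ Finset.range (m+1), (-1 : R) ^ r * (r : R) * ((r : R) - 1) * ch m r)
      = ∑ S ∈ (Finset.univ : Finset (Fin m)).powerset,
          (-1 : R) ^ S.card * (S.card : R) * ((S.card : R) - 1) * ∏ j ∈ S, E j := by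
    rw [Finset.powerset_card_disjiUnion, Finset.sum_disjiUnion (h := (Finset.pairwise_disjoint_powersetCard _).set_pairwise _), Finset.card_univ,
      Fintype.card_fin]
    refine Finset.sum_congr rfl fun r _ => ?_
    rw [ch, Finset.mul_sum]
    refine Finset.sum_congr rfl fun S hS => ?_
    rw [(Finset.mem_powersetCard.mp hS).2]
  rw [stepB]
  -- Step C+D: coefficient as offDiag count, swap sums
  have stepC : ∀ S : Finset (Fin m),
      (-1 : R) ^ S.card * (S.card : R) * ((S.card : R) - 1) * ∏ j ∈ S, E j
      = ∑ p ∈ (Finset.univ : Finset (Fin m)).offDiag,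
          if p.1 ∈ S ∧ p.2 ∈ S then (-1 : R) ^ S.card * ∏ j ∈ S, E j else 0 := by
    intro S
    rw [← Finset.sum_filter]
    have hfil : (Finset.univ : Finset (Fin m)).offDiag.filter
        (fun p => p.1 ∈ S ∧ p.2 ∈ S) = S.offDiag := by
      ext p
      simp only [Finset.mem_filter, Finset.mem_offDiag, Finset.mem_univ, true_and]
      tauto
    rw [hfil, Finset.sum_const, Finset.offDiag_card, nsmul_eq_mul]
    have hle : S.card ≤ S.card * S.card := by nlinarith [Nat.zero_le S.card]
    rw [Nat.cast_sub hle, Nat.cast_mul]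
    ring
  -- Step E
  have stepE : ∀ j k : Fin m, j ≠ k →
      (∑ S ∈ (Finset.univ : Finset (Fin m)).powerset,
        if j ∈ S ∧ k ∈ S then (-1 : R) ^ S.card * ∏ l ∈ S, E l else 0)
      = E j * E k * ∏ l ∈ Finset.univ \ {j, k}, (1 - E l) := by
    intro j k hjk
    have hexp : (∏ l ∈ Finset.univ \ ({j, k} : Finset (Fin m)), (1 - E l))
        = ∑ T ∈ (Finset.univ \ ({j, k} : Finset (Fin m))).powerset,
            (-1 : R) ^ T.card * ∏ l ∈ T, E l := by
      have : ∀ l : Fin m, (1 : R) - E l = -E l + 1 := fun l => by ring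
      simp_rw [this]
      rw [Finset.prod_add]
      refine Finset.sum_congr rfl fun T _ => ?_
      rw [Finset.prod_const_one, mul_one,
        Finset.prod_congr rfl (fun l _ => by ring : ∀ l ∈ T, -E l = (-1 : R) * E l),
        Finset.prod_mul_distrib, Finset.prod_const]
    rw [hexp, Finset.mul_sum, ← Finset.sum_filter]
    refine Finset.sum_nbij' (fun S => S \ ({j, k} : Finset (Fin m)))
      (fun T => insert j (insert k T)) ?_ ?_ ?_ ?_ ?_
    · intro S hS
      rw [Finset.mem_powerset]
      exact Finset.sdiff_subset_sdiff (Finset.subset_univ S) (le_refl _)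
    · intro T hT
      rw [Finset.mem_powerset] at hT
      simp only [Finset.mem_filter, Finset.mem_powerset]
      refine ⟨Finset.subset_univ _, ?_, ?_⟩
      · exact Finset.mem_insert_self _ _
      · exact Finset.mem_insert_of_mem (Finset.mem_insert_self _ _)
    · intro S hS
      simp only [Finset.mem_filter] at hS
      ext a
      simp only [Finset.mem_insert, Finset.mem_sdiff, Finset.mem_singleton]
      by_cases ha : a = j
      · subst ha; tauto
      by_cases hb : a = k
      · subst hb; tauto
      · simp [ha, hb]
    · intro T hT
      rw [Finset.mem_powerset] at hT
      have hj : j ∉ T := fun h => by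
        have := hT h; rw [Finset.mem_sdiff] at this; exact this.2 (by simp)
      have hk : k ∉ T := fun h => by
        have := hT h; rw [Finset.mem_sdiff] at this; exact this.2 (by simp)
      ext a
      simp only [Finset.mem_sdiff, Finset.mem_insert, Finset.mem_singleton]
      constructor
      · rintro ⟨h1 | h1 | h1, h2⟩ <;> tauto
      · intro ha
        refine ⟨Or.inr (Or.inr ha), ?_⟩
        rintro (rfl | rfl) <;> [exact hj ha; exact hk ha]
    · intro S hS
      simp only [Finset.mem_filter, Finset.mem_powerset] at hS
      obtain ⟨-, hjS, hkS⟩ := hS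
      have hsub : ({j, k} : Finset (Fin m)) ⊆ S := by
        intro a ha
        rcases Finset.mem_insert.mp ha with rfl | ha
        · exact hjS
        · rw [Finset.mem_singleton] at ha; subst ha; exact hkS
      have hcard2 : ({j, k} : Finset (Fin m)).card = 2 := Finset.card_pair hjk
      have hprod : ∏ l ∈ S, E l = (∏ l ∈ S \ ({j, k} : Finset (Fin m)), E l) * (E j * E k) := by
        rw [← Finset.prod_pair hjk, Finset.prod_sdiff hsub]
      have hcards : (S \ ({j, k} : Finset (Fin m))).card = S.card - 2 := by
        rw [Finset.card_sdiff_of_subset hsub, hcard2]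
      have hge : 2 ≤ S.card := hcard2 ▸ Finset.card_le_card hsub
      have hsign : (-1 : R) ^ S.card = (-1 : R) ^ (S.card - 2) := by
        conv_lhs => rw [← Nat.sub_add_cancel hge]
        rw [pow_add]
        norm_num
      rw [hprod, hcards, hsign]
      ring
  -- assemble
  calc Td m φ * ∑ S ∈ (Finset.univ : Finset (Fin m)).powerset,
        (-1 : R) ^ S.card * (S.card : R) * ((S.card : R) - 1) * ∏ j ∈ S, E j
      = Td m φ * ∑ p ∈ (Finset.univ : Finset (Fin m)).offDiag,
          ∑ S ∈ (Finset.univ : Finset (Fin m)).powerset,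
            (if p.1 ∈ S ∧ p.2 ∈ S then (-1 : R) ^ S.card * ∏ j ∈ S, E j else 0) := by
        rw [Finset.sum_congr rfl fun S _ => stepC S, Finset.sum_comm]
    _ = ∑ p ∈ (Finset.univ : Finset (Fin m)).offDiag,
          Td m φ * (E p.1 * E p.2 * ∏ l ∈ Finset.univ \ {p.1, p.2}, (1 - E l)) := by
        rw [Finset.mul_sum]
        refine Finset.sum_congr rfl fun p hp => ?_
        rw [stepE p.1 p.2 (Finset.mem_offDiag.mp hp).2.2]
    _ = ∑ p ∈ (Finset.univ : Finset (Fin m)).offDiag,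
        substAt p.1 (φ * expNeg) * substAt p.2 (φ * expNeg) *
          ∏ l ∈ Finset.univ \ {p.1, p.2}, MvPowerSeries.X l := by
        refine Finset.sum_congr rfl fun p hp => ?_
        obtain ⟨-, -, hjk⟩ := Finset.mem_offDiag.mp hp
        set j := p.1; set k := p.2
        have hsub : ({j, k} : Finset (Fin m)) ⊆ Finset.univ := Finset.subset_univ _
        have hTd : Td m φ
            = (∏ l ∈ Finset.univ \ ({j, k} : Finset (Fin m)), substAt l φ)
              * (substAt j φ * substAt k φ) := by
          rw [Td, ← Finset.prod_pair (f := fun l => substAt l φ) hjk, Finset.prod_sdiff hsub]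
        have hXl : ∀ l : Fin m, substAt l φ * (1 - E l) = MvPowerSeries.X l := by
          intro l
          rw [hE]
          have : (1 : R) - substAt l expNeg = substAt l (1 - expNeg) := by
            rw [substAt_sub, substAt_one]
          rw [this, ← substAt_mul, hφ, substAt_X]
        have hprodX : (∏ l ∈ Finset.univ \ ({j, k} : Finset (Fin m)), substAt l φ)
            * (∏ l ∈ Finset.univ \ ({j, k} : Finset (Fin m)), (1 - E l))
            = ∏ l ∈ Finset.univ \ ({j, k} : Finset (Fin m)), MvPowerSeries.X l := by
          rw [← Finset.prod_mul_distrib]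
          exact Finset.prod_congr rfl fun l _ => hXl l
        rw [hTd, substAt_mul, substAt_mul, ← hprodX, hE]
        ring

/-- indicator finsupp of a finset -/
def indic {m : ℕ} (U : Finset (Fin m)) : Fin m →₀ ℕ := ∑ l ∈ U, Finsupp.single l 1

lemma indic_apply {m : ℕ} (U : Finset (Fin m)) (a : Fin m) :
    indic U a = if a ∈ U then 1 else 0 := by
  classical
  rw [indic, Finset.sum_apply']
  simp [Finsupp.single_apply]

lemma indic_support {m : ℕ} (U : Finset (Fin m)) : (indic U).support = U := by
  ext a
  rw [Finsupp.mem_support_iff, indic_apply]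
  split <;> simp_all

lemma prod_X_eq {m : ℕ} (U : Finset (Fin m)) :
    (∏ l ∈ U, MvPowerSeries.X l : MvPowerSeries (Fin m) ℚ)
      = MvPowerSeries.monomial (R := ℚ) (indic U) 1 := by
  classical
  induction U using Finset.induction with
  | empty => simp [indic]
  | @insert a s ha ih =>
      rw [Finset.prod_insert ha, ih, MvPowerSeries.X, MvPowerSeries.monomial_mul_monomial,
        one_mul]
      congr 1
      rw [indic, indic, Finset.sum_insert ha]

lemma card_support_eq {m : ℕ} (d : Fin m →₀ ℕ) (h1 : ∀ l, d l ≤ 1) :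
    d.support.card = ∑ l, d l := by
  classical
  have h2 : ∑ l, d l = ∑ _l ∈ d.support, (1 : ℕ) := by
    rw [← Finset.sum_subset (Finset.subset_univ d.support)
      (fun x _ hx => Finsupp.notMem_support_iff.mp hx)]
    exact Finset.sum_congr rfl fun l hl => le_antisymm (h1 l)
      (Nat.one_le_iff_ne_zero.mpr (Finsupp.mem_support_iff.mp hl))
  rw [h2, Finset.sum_const, smul_eq_mul, mul_one]

lemma coeff_esymm {m k : ℕ} (d : Fin m →₀ ℕ) :
    MvPowerSeries.coeff (R := ℚ) d (esymm m k)
      = if (∀ l, d l ≤ 1) ∧ d.support.card = k then 1 else 0 := by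
  classical
  rw [esymm, map_sum]
  simp_rw [prod_X_eq, MvPowerSeries.coeff_monomial]
  by_cases hc : (∀ l, d l ≤ 1) ∧ d.support.card = k
  · rw [if_pos hc]
    have hmem : d.support ∈ Finset.powersetCard k (Finset.univ : Finset (Fin m)) := by
      rw [Finset.mem_powersetCard]
      exact ⟨Finset.subset_univ _, hc.2⟩
    have hothers : ∀ S ∈ Finset.powersetCard k (Finset.univ : Finset (Fin m)),
        S ≠ d.support → (if d = indic S then (1 : ℚ) else 0) = 0 := by
      intro S _ hS
      rw [if_neg]
      intro hd
      exact hS (by rw [hd, indic_support])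
    rw [Finset.sum_eq_single_of_mem d.support hmem hothers, if_pos]
    ext a
    rw [indic_apply]
    rcases Nat.le_one_iff_eq_zero_or_eq_one.mp (hc.1 a) with h | h <;>
      simp [h, Finsupp.mem_support_iff]
  · rw [if_neg hc]
    apply Finset.sum_eq_zero
    intro S hS
    rw [if_neg]
    intro hd
    apply hc
    constructor
    · intro l
      rw [hd, indic_apply]
      split <;> omega
    · rw [hd, indic_support, (Finset.mem_powersetCard.mp hS).2]

lemma coeff_pair_mul {m : ℕ} (j k : Fin m) (hjk : j ≠ k) (f g : PowerSeries ℚ)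
    (p : Fin m →₀ ℕ) :
    MvPowerSeries.coeff (R := ℚ) p (substAt j f * substAt k g)
      = if p.support ⊆ {j, k} then
          PowerSeries.coeff (R := ℚ) (p j) f * PowerSeries.coeff (R := ℚ) (p k) g else 0 := by
  classical
  rw [MvPowerSeries.coeff_mul]
  by_cases hp : p.support ⊆ ({j, k} : Finset (Fin m))
  · rw [if_pos hp]
    have hdecomp : Finsupp.single j (p j) + Finsupp.single k (p k) = p := by
      ext a
      rw [Finsupp.add_apply]
      by_cases haj : a = j
      · subst haj; rw [Finsupp.single_eq_same, Finsupp.single_eq_of_ne' hjk.symm]; omega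
      by_cases hak : a = k
      · subst hak; rw [Finsupp.single_eq_same, Finsupp.single_eq_of_ne' hjk]; omega
      · rw [Finsupp.single_eq_of_ne' (Ne.symm haj), Finsupp.single_eq_of_ne' (Ne.symm hak)]
        have : a ∉ p.support := fun h => by
          rcases Finset.mem_insert.mp (hp h) with h' | h'
          · exact haj h'
          · exact hak (Finset.mem_singleton.mp h')
        rw [Finsupp.notMem_support_iff.mp this]; omega
    have hmem : (Finsupp.single j (p j), Finsupp.single k (p k))
        ∈ Finset.HasAntidiagonal.antidiagonal p := by rw [Finset.HasAntidiagonal.mem_antidiagonal]; exact hdecomp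
    have hothers : ∀ q ∈ Finset.HasAntidiagonal.antidiagonal p,
        q ≠ (Finsupp.single j (p j), Finsupp.single k (p k)) →
        MvPowerSeries.coeff (R := ℚ) q.1 (substAt j f) * MvPowerSeries.coeff (R := ℚ) q.2 (substAt k g)
          = 0 := by
      rintro ⟨a, b⟩ hab hne
      rw [Finset.HasAntidiagonal.mem_antidiagonal] at hab
      rw [coeff_substAt, coeff_substAt]
      by_cases h1 : a.support ⊆ {j}
      · by_cases h2 : b.support ⊆ {k}
        · exfalso
          apply hne
          have ha' := (supp_subset_iff j a).mp h1
          have hb' := (supp_subset_iff k b).mp h2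
          have haj : a j = p j := by
            have := congrArg (fun q => q j) hab
            simp only [Finsupp.add_apply] at this
            rw [hb', Finsupp.single_eq_of_ne' hjk.symm] at this
            simpa using this
          have hbk : b k = p k := by
            have := congrArg (fun q => q k) hab
            simp only [Finsupp.add_apply] at this
            rw [ha', Finsupp.single_eq_of_ne' hjk] at this
            simpa [Finsupp.single_eq_of_ne' hjk] using this
          rw [Prod.mk.injEq]
          constructor
          · rw [ha', haj]
          · rw [hb', hbk]
        · rw [if_neg h2, mul_zero]
      · rw [if_neg h1, zero_mul]
    rw [Finset.sum_eq_single_of_mem _ hmem hothers, coeff_substAt, coeff_substAt,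
      if_pos Finsupp.support_single_subset, if_pos Finsupp.support_single_subset,
      Finsupp.single_eq_same, Finsupp.single_eq_same]
  · rw [if_neg hp]
    apply Finset.sum_eq_zero
    rintro ⟨a, b⟩ hab
    rw [Finset.HasAntidiagonal.mem_antidiagonal] at hab
    rw [coeff_substAt, coeff_substAt]
    by_cases h1 : a.support ⊆ {j}
    · by_cases h2 : b.support ⊆ {k}
      · exfalso
        apply hp
        rw [← hab]
        refine (Finsupp.support_add).trans ?_
        apply Finset.union_subset
        · exact h1.trans (by intro x hx; simp_all)
        · exact h2.trans (by intro x hx; simp_all)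
      · rw [if_neg h2, mul_zero]
    · rw [if_neg h1, zero_mul]

lemma sum_single_one {m : ℕ} (i : Fin m) : (∑ l, Finsupp.single i 1 l) = 1 := by
  classical
  simp [Finsupp.single_apply]

lemma sum_sub_single {m : ℕ} (n : Fin m →₀ ℕ) (i : Fin m) (h : Finsupp.single i 1 ≤ n) :
    (∑ l, (n - Finsupp.single i 1 : Fin m →₀ ℕ) l) + 1 = ∑ l, n l := by
  classical
  have hadd : (∑ l, (n - Finsupp.single i 1 : Fin m →₀ ℕ) l) + (∑ l, Finsupp.single i 1 l)
      = ∑ l, n l := by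
    rw [← Finset.sum_add_distrib]
    refine Finset.sum_congr rfl fun l _ => ?_
    rw [Finsupp.tsub_apply]
    exact Nat.sub_add_cancel (Finsupp.le_def.mp h l)
  rw [sum_single_one] at hadd
  exact hadd

lemma exists_unique_zero {m : ℕ} (d : Fin m →₀ ℕ) (h1 : ∀ l, d l ≤ 1)
    (h2 : (∑ l, d l) + 1 = m) :
    ∃ b, d b = 0 ∧ ∀ l, l ≠ b → d l = 1 := by
  classical
  have hsum : ∑ l, d l = (Finset.univ.filter (fun l => ¬ d l = 0)).card := by
    rw [← Finset.sum_filter_ne_zero]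
    rw [Finset.sum_congr rfl (fun l hl => le_antisymm (h1 l)
      (Nat.one_le_iff_ne_zero.mpr (Finset.mem_filter.mp hl).2))]
    simp
  have hcards := Finset.card_filter_add_card_filter_not
    (s := (Finset.univ : Finset (Fin m))) (p := fun l => d l = 0)
  rw [Finset.card_univ, Fintype.card_fin] at hcards
  have hone : (Finset.univ.filter (fun l => d l = 0)).card = 1 := by omega
  obtain ⟨b, hb⟩ := Finset.card_eq_one.mp hone
  refine ⟨b, ?_, ?_⟩
  · have : b ∈ Finset.univ.filter (fun l => d l = 0) := by
      rw [hb]; exact Finset.mem_singleton_self b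
    exact (Finset.mem_filter.mp this).2
  · intro l hl
    have : l ∉ Finset.univ.filter (fun l => d l = 0) := by
      rw [hb]; simpa using hl
    have hne : ¬ d l = 0 := fun h0 => this (Finset.mem_filter.mpr ⟨Finset.mem_univ _, h0⟩)
    exact le_antisymm (h1 l) (Nat.one_le_iff_ne_zero.mpr hne)

lemma all_ones_of_sum {m : ℕ} (d : Fin m →₀ ℕ) (h1 : ∀ l, d l ≤ 1)
    (h2 : (∑ l, d l) = m) : ∀ l, d l = 1 := by
  classical
  have hsum : ∑ l, d l = (Finset.univ.filter (fun l => ¬ d l = 0)).card := by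
    rw [← Finset.sum_filter_ne_zero]
    rw [Finset.sum_congr rfl (fun l hl => le_antisymm (h1 l)
      (Nat.one_le_iff_ne_zero.mpr (Finset.mem_filter.mp hl).2))]
    simp
  have hcards := Finset.card_filter_add_card_filter_not
    (s := (Finset.univ : Finset (Fin m))) (p := fun l => d l = 0)
  rw [Finset.card_univ, Fintype.card_fin] at hcards
  have hzero : (Finset.univ.filter (fun l => d l = 0)).card = 0 := by omega
  intro l
  have : l ∉ Finset.univ.filter (fun l => d l = 0) := by
    rw [Finset.card_eq_zero.mp hzero]; exact Finset.notMem_empty l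
  have hne : ¬ d l = 0 := fun h0 => this (Finset.mem_filter.mpr ⟨Finset.mem_univ _, h0⟩)
  exact le_antisymm (h1 l) (Nat.one_le_iff_ne_zero.mpr hne)

lemma coeff_term {m : ℕ} (j k : Fin m) (hjk : j ≠ k) (f : PowerSeries ℚ) (n : Fin m →₀ ℕ) :
    MvPowerSeries.coeff (R := ℚ) n (substAt j f * substAt k f *
        ∏ l ∈ Finset.univ \ {j, k}, MvPowerSeries.X l)
      = if (∀ l, l ≠ j → l ≠ k → n l = 1) then
          PowerSeries.coeff (R := ℚ) (n j) f * PowerSeries.coeff (R := ℚ) (n k) f else 0 := by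
  classical
  set U : Finset (Fin m) := Finset.univ \ {j, k} with hU
  have hmemU : ∀ l : Fin m, l ∈ U ↔ (l ≠ j ∧ l ≠ k) := by
    intro l
    rw [hU, Finset.mem_sdiff]
    simp
  have hjU : j ∉ U := fun h => ((hmemU j).mp h).1 rfl
  have hkU : k ∉ U := fun h => ((hmemU k).mp h).2 rfl
  rw [prod_X_eq, MvPowerSeries.coeff_mul_monomial]
  by_cases hQ : ∀ l, l ≠ j → l ≠ k → n l = 1
  · have hd : indic U ≤ n := by
      rw [Finsupp.le_def]
      intro a
      rw [indic_apply]
      split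
      · next ha => rw [hQ a ((hmemU a).mp ha).1 ((hmemU a).mp ha).2]
      · exact Nat.zero_le _
    rw [if_pos hd, mul_one, coeff_pair_mul j k hjk]
    have hj' : (n - indic U) j = n j := by
      rw [Finsupp.tsub_apply, indic_apply, if_neg hjU, Nat.sub_zero]
    have hk' : (n - indic U) k = n k := by
      rw [Finsupp.tsub_apply, indic_apply, if_neg hkU, Nat.sub_zero]
    have hsupp : (n - indic U).support ⊆ {j, k} := by
      intro a ha
      rw [Finsupp.mem_support_iff, Finsupp.tsub_apply, indic_apply] at ha
      by_contra hmem
      simp only [Finset.mem_insert, Finset.mem_singleton, not_or] at hmem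
      have haU : a ∈ U := (hmemU a).mpr ⟨hmem.1, hmem.2⟩
      rw [if_pos haU, hQ a hmem.1 hmem.2] at ha
      omega
    rw [if_pos hsupp, hj', hk', if_pos hQ]
  · rw [if_neg hQ]
    push_neg at hQ
    obtain ⟨a, haj, hak, ha⟩ := hQ
    have haU : a ∈ U := (hmemU a).mpr ⟨haj, hak⟩
    by_cases hd : indic U ≤ n
    · rw [if_pos hd, mul_one, coeff_pair_mul j k hjk, if_neg]
      intro hsupp
      have h1 : (n - indic U) a = 0 := by
        rw [← Finsupp.notMem_support_iff]
        intro hmem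
        rcases Finset.mem_insert.mp (hsupp hmem) with h | h
        · exact haj h
        · exact hak (Finset.mem_singleton.mp h)
      rw [Finsupp.tsub_apply, indic_apply, if_pos haU] at h1
      have h2 := Finsupp.le_def.mp hd a
      rw [indic_apply, if_pos haU] at h2
      omega
    · rw [if_neg hd]

lemma coeff_e1_mul {m : ℕ} (F : MvPowerSeries (Fin m) ℚ) (n : Fin m →₀ ℕ) :
    MvPowerSeries.coeff (R := ℚ) n (esymm m 1 * F)
      = ∑ i : Fin m, (if Finsupp.single i 1 ≤ n then
          MvPowerSeries.coeff (R := ℚ) (n - Finsupp.single i 1) F else 0) := by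
  classical
  have he1 : esymm m 1 = ∑ i : Fin m, (MvPowerSeries.X i : MvPowerSeries (Fin m) ℚ) := by
    rw [esymm, Finset.powersetCard_one, Finset.sum_map]
    refine Finset.sum_congr rfl fun i _ => ?_
    simp
  rw [he1, Finset.sum_mul, map_sum]
  refine Finset.sum_congr rfl fun i _ => ?_
  rw [MvPowerSeries.X, MvPowerSeries.coeff_monomial_mul]
  split <;> simp

/-- `Td · (Σ_{r=2}^m (−1)^r · r(r−1) · ch_r)` agrees in total degree `m` with
`(1/6) · e_1 · e_{m−1} + (m(3m−5)/12) · e_m`.  (The term `e_{m−1}` presupposes `1 ≤ m`.) -/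
theorem td_mul_second_weighted_sum_ch (m : ℕ) (hm : 0 < m) (φ : PowerSeries ℚ)
    (hφ : φ * (1 - expNeg) = PowerSeries.X) :
    AgreeAt m m
      (Td m φ * ∑ r ∈ Finset.Icc 2 m,
        (-1 : MvPowerSeries (Fin m) ℚ) ^ r * (r : MvPowerSeries (Fin m) ℚ) *
          ((r : MvPowerSeries (Fin m) ℚ) - 1) * ch m r)
      (MvPowerSeries.C (σ := Fin m) (R := ℚ) (1 / 6 : ℚ) * (esymm m 1 * esymm m (m - 1)) +
        MvPowerSeries.C (σ := Fin m) (R := ℚ) ((m : ℚ) * (3 * (m : ℚ) - 5) / 12) * esymm m m) := by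
  classical
  intro n hn
  obtain ⟨hg0, hg1, hg2⟩ := g_coeffs φ hφ
  rw [structural m φ hφ, map_sum,
    Finset.sum_congr rfl
      (fun p hp => coeff_term p.1 p.2 (Finset.mem_offDiag.mp hp).2.2 (φ * expNeg) n),
    map_add, MvPowerSeries.coeff_C_mul, MvPowerSeries.coeff_C_mul, coeff_e1_mul]
  simp_rw [coeff_esymm]
  by_cases h1 : ∀ l, n l = 1
  · -- all ones
    have hLcong : ∀ p ∈ (Finset.univ : Finset (Fin m)).offDiag,
        (if (∀ l, l ≠ p.1 → l ≠ p.2 → n l = 1) then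
          PowerSeries.coeff (R := ℚ) (n p.1) (φ * expNeg) *
            PowerSeries.coeff (R := ℚ) (n p.2) (φ * expNeg) else 0) = (1/4 : ℚ) := by
      intro p _
      rw [if_pos (fun l _ _ => h1 l), h1 p.1, h1 p.2, hg1]
      norm_num
    rw [Finset.sum_congr rfl hLcong, Finset.sum_const, Finset.offDiag_card,
      Finset.card_univ, Fintype.card_fin, nsmul_eq_mul]
    have hB1 : ∀ i ∈ (Finset.univ : Finset (Fin m)),
        (if Finsupp.single i 1 ≤ n then
          (if (∀ l, (n - Finsupp.single i 1 : Fin m →₀ ℕ) l ≤ 1) ∧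
              (n - Finsupp.single i 1 : Fin m →₀ ℕ).support.card = m - 1 then (1:ℚ) else 0)
          else 0) = 1 := by
      intro i _
      have hle : Finsupp.single i 1 ≤ n := Finsupp.single_le_iff.mpr (by rw [h1 i])
      have hd1 : ∀ l, (n - Finsupp.single i 1 : Fin m →₀ ℕ) l ≤ 1 := fun l => by
        rw [Finsupp.tsub_apply]
        exact le_trans (Nat.sub_le _ _) (le_of_eq (h1 l))
      have hsum := sum_sub_single n i hle
      rw [hn] at hsum
      have hcard : (n - Finsupp.single i 1 : Fin m →₀ ℕ).support.card = m - 1 := by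
        rw [card_support_eq _ hd1]; omega
      rw [if_pos hle, if_pos ⟨hd1, hcard⟩]
    rw [Finset.sum_congr rfl hB1, Finset.sum_const, Finset.card_univ, Fintype.card_fin,
      nsmul_eq_mul, mul_one]
    have hsupp : n.support = Finset.univ := by
      ext l
      simp [Finsupp.mem_support_iff, h1 l]
    rw [if_pos ⟨fun l => le_of_eq (h1 l), by rw [hsupp, Finset.card_univ, Fintype.card_fin]⟩]
    have hmle : m ≤ m * m := Nat.le_mul_of_pos_left m hm
    push_cast [Nat.cast_sub hmle]
    ring
  · by_cases h2a : ∃ a b : Fin m, a ≠ b ∧ n a = 2 ∧ n b = 0 ∧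
        (∀ l, l ≠ a → l ≠ b → n l = 1)
    · obtain ⟨a, b, hab, hna, hnb, hrest⟩ := h2a
      -- LHS = 1/6
      have hpair_sub : ({(a,b),(b,a)} : Finset (Fin m × Fin m))
          ⊆ (Finset.univ : Finset (Fin m)).offDiag := by
        intro p hp
        rcases Finset.mem_insert.mp hp with rfl | hp
        · exact Finset.mem_offDiag.mpr ⟨Finset.mem_univ _, Finset.mem_univ _, hab⟩
        · rw [Finset.mem_singleton] at hp
          subst hp
          exact Finset.mem_offDiag.mpr ⟨Finset.mem_univ _, Finset.mem_univ _, hab.symm⟩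
      have hvanish : ∀ p ∈ (Finset.univ : Finset (Fin m)).offDiag,
          p ∉ ({(a,b),(b,a)} : Finset (Fin m × Fin m)) →
          (if (∀ l, l ≠ p.1 → l ≠ p.2 → n l = 1) then
            PowerSeries.coeff (R := ℚ) (n p.1) (φ * expNeg) *
              PowerSeries.coeff (R := ℚ) (n p.2) (φ * expNeg) else 0) = 0 := by
        intro p hp hnot
        have hne := (Finset.mem_offDiag.mp hp).2.2
        rw [if_neg]
        intro hQ
        have ha' : p.1 = a ∨ p.2 = a := by
          by_contra hc
          push_neg at hc
          have := hQ a (fun h => hc.1 h.symm) (fun h => hc.2 h.symm)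
          omega
        have hb' : p.1 = b ∨ p.2 = b := by
          by_contra hc
          push_neg at hc
          have := hQ b (fun h => hc.1 h.symm) (fun h => hc.2 h.symm)
          omega
        apply hnot
        rcases ha' with h | h <;> rcases hb' with h' | h'
        · exact absurd (h ▸ h' ▸ rfl : a = b) hab
        · rw [Finset.mem_insert]
          left
          exact Prod.ext h h'
        · rw [Finset.mem_insert, Finset.mem_singleton]
          right
          exact Prod.ext h' h
        · exact absurd (h ▸ h' ▸ rfl : a = b) hab
      rw [← Finset.sum_subset hpair_sub hvanish,
        Finset.sum_pair (by simp [Prod.ext_iff, hab, hab.symm] : ((a,b) : Fin m × Fin m) ≠ (b,a))]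
      rw [if_pos (by intro l hla hlb; exact hrest l hla hlb),
        if_pos (by intro l hlb hla; exact hrest l hla hlb)]
      simp only [hna, hnb, hg0, hg2]
      -- RHS
      have hB1 : (∑ i : Fin m, (if Finsupp.single i 1 ≤ n then
          (if (∀ l, (n - Finsupp.single i 1 : Fin m →₀ ℕ) l ≤ 1) ∧
              (n - Finsupp.single i 1 : Fin m →₀ ℕ).support.card = m - 1 then (1:ℚ) else 0)
          else 0)) = 1 := by
        rw [Finset.sum_eq_single_of_mem a (Finset.mem_univ a)]
        · have hle : Finsupp.single a 1 ≤ n := Finsupp.single_le_iff.mpr (by omega)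
          have hd1 : ∀ l, (n - Finsupp.single a 1 : Fin m →₀ ℕ) l ≤ 1 := fun l => by
            rw [Finsupp.tsub_apply]
            by_cases hla : l = a
            · subst hla; rw [Finsupp.single_eq_same]; omega
            by_cases hlb : l = b
            · subst hlb; omega
            · rw [hrest l hla hlb, Finsupp.single_eq_of_ne' (Ne.symm hla)]; omega
          have hsum := sum_sub_single n a hle
          rw [hn] at hsum
          have hcard : (n - Finsupp.single a 1 : Fin m →₀ ℕ).support.card = m - 1 := by
            rw [card_support_eq _ hd1]; omega
          rw [if_pos hle, if_pos ⟨hd1, hcard⟩]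
        · intro i _ hia
          by_cases hle : Finsupp.single i 1 ≤ n
          · rw [if_pos hle, if_neg]
            rintro ⟨hd1, -⟩
            have := hd1 a
            rw [Finsupp.tsub_apply, Finsupp.single_eq_of_ne' hia] at this
            omega
          · rw [if_neg hle]
      rw [hB1, if_neg (fun hc => by have := hc.1 a; omega)]
      norm_num
    · -- neither: both sides 0
      push_neg at h1
      have hA : ∀ p ∈ (Finset.univ : Finset (Fin m)).offDiag,
          (if (∀ l, l ≠ p.1 → l ≠ p.2 → n l = 1) then
            PowerSeries.coeff (R := ℚ) (n p.1) (φ * expNeg) *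
              PowerSeries.coeff (R := ℚ) (n p.2) (φ * expNeg) else 0) = 0 := by
        intro p hp
        have hne := (Finset.mem_offDiag.mp hp).2.2
        rw [if_neg]
        intro hQ
        have hm2 : 2 ≤ m := by
          have : 1 < Fintype.card (Fin m) := Fintype.one_lt_card_iff.mpr ⟨p.1, p.2, hne⟩
          rwa [Fintype.card_fin] at this
        have hsplit := Finset.sum_sdiff (Finset.subset_univ ({p.1, p.2} : Finset (Fin m)))
          (f := fun l => n l)
        rw [Finset.sum_pair hne] at hsplit
        have hones : ∑ l ∈ Finset.univ \ ({p.1, p.2} : Finset (Fin m)), n l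
            = (Finset.univ \ ({p.1, p.2} : Finset (Fin m))).card := by
          have hall : ∀ l ∈ Finset.univ \ ({p.1, p.2} : Finset (Fin m)), n l = 1 := by
            intro l hl
            rw [Finset.mem_sdiff, Finset.mem_insert, Finset.mem_singleton] at hl
            exact hQ l (fun h => hl.2 (Or.inl h)) (fun h => hl.2 (Or.inr h))
          rw [Finset.sum_congr rfl hall]
          simp
        have hcard : (Finset.univ \ ({p.1, p.2} : Finset (Fin m))).card = m - 2 := by
          rw [Finset.card_sdiff_of_subset (Finset.subset_univ _), Finset.card_univ, Fintype.card_fin,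
            Finset.card_pair hne]
        rw [hones, hcard, hn] at hsplit
        have h2 : n p.1 + n p.2 = 2 := by omega
        rcases (by omega : n p.1 = 0 ∧ n p.2 = 2 ∨ n p.1 = 1 ∧ n p.2 = 1 ∨
            n p.1 = 2 ∧ n p.2 = 0) with ⟨h, h'⟩ | ⟨h, h'⟩ | ⟨h, h'⟩
        · exact h2a ⟨p.2, p.1, hne.symm, h', h, fun l hl2 hl1 => hQ l hl1 hl2⟩
        · obtain ⟨l0, hl0⟩ := h1
          apply hl0
          by_cases hl1 : l0 = p.1
          · subst hl1; exact h
          by_cases hl2 : l0 = p.2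
          · subst hl2; exact h'
          · exact hQ l0 hl1 hl2
        · exact h2a ⟨p.1, p.2, hne, h, h', hQ⟩
      rw [Finset.sum_eq_zero hA]
      have hB1 : (∑ i : Fin m, (if Finsupp.single i 1 ≤ n then
          (if (∀ l, (n - Finsupp.single i 1 : Fin m →₀ ℕ) l ≤ 1) ∧
              (n - Finsupp.single i 1 : Fin m →₀ ℕ).support.card = m - 1 then (1:ℚ) else 0)
          else 0)) = 0 := by
        apply Finset.sum_eq_zero
        intro i _
        by_cases hle : Finsupp.single i 1 ≤ n
        · rw [if_pos hle, if_neg]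
          rintro ⟨hd1, hcard⟩
          have hsum := sum_sub_single n i hle
          rw [hn] at hsum
          have hsd : (∑ l, (n - Finsupp.single i 1 : Fin m →₀ ℕ) l) + 1 = m := hsum
          obtain ⟨b, hb0, hb1⟩ := exists_unique_zero _ hd1 hsd
          have hni : 1 ≤ n i := Finsupp.single_le_iff.mp hle
          by_cases hbi : b = i
          · subst hbi
            obtain ⟨l0, hl0⟩ := h1
            apply hl0
            by_cases hli : l0 = b
            · subst hli
              have := hb0
              rw [Finsupp.tsub_apply, Finsupp.single_eq_same] at this
              omega
            · have := hb1 l0 hli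
              rw [Finsupp.tsub_apply, Finsupp.single_eq_of_ne' (Ne.symm hli)] at this
              omega
          · apply h2a
            refine ⟨i, b, fun h => hbi h.symm, ?_, ?_, ?_⟩
            · have := hb1 i (Ne.symm hbi)
              rw [Finsupp.tsub_apply, Finsupp.single_eq_same] at this
              omega
            · have := hb0
              rw [Finsupp.tsub_apply, Finsupp.single_eq_of_ne' (fun h => hbi h.symm)] at this
              omega
            · intro l hli hlb
              have := hb1 l hlb
              rw [Finsupp.tsub_apply, Finsupp.single_eq_of_ne' (Ne.symm hli)] at this
              omega
        · rw [if_neg hle]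
      rw [hB1, if_neg]
      · norm_num
      · rintro ⟨hd1, -⟩
        obtain ⟨l0, hl0⟩ := h1
        exact hl0 (all_ones_of_sum n hd1 hn l0)
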